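/- A graph admits a 3-cycle double cover if and only if it admits an oriented 4-cycle double cover. -/

import Mathlib

/-- An even subgraph (cycle) of `G`, given by its edge set: a subset of the
edges of `G` in which every vertex has even degree. -/
def IsEvenSubgraph {V : Type*} (G : SimpleGraph V) (E : Set (Sym2 V)) : Prop :=
  E ⊆ G.edgeSet ∧ ∀ v : V, Even (Set.ncard {w : V | s(v, w) ∈ E})

/-- An oriented cycle (oriented even subgraph) of `G`, encoded as a
divergence-free skew-symmetric flow with values in `{-1, 0, 1}` supported
on edges of `G`. -/
def IsOrientedCycle {V : Type*} [Fintype V] (G : SimpleGraph V)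
    (f : V → V → ℤ) : Prop :=
  (∀ u v, f u v = - f v u) ∧
  (∀ u v, f u v ≠ 0 → G.Adj u v) ∧
  (∀ u v, f u v = 0 ∨ f u v = 1 ∨ f u v = -1) ∧
  (∀ v, ∑ w, f v w = 0)

open Finset

section Aux

variable {V : Type*} [Fintype V] [DecidableEq V]

/-- unit flow sending one unit from `a` to `b`. -/
private def uFlow (a b : V) : V → V → ℤ := fun u v =>
  if u = a ∧ v = b then 1 else if u = b ∧ v = a then -1 else 0

private lemma uFlow_skew {a b : V} (hab : a ≠ b) (u v : V) :
    uFlow a b u v = - uFlow a b v u := by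
  simp only [uFlow]
  split_ifs with h1 h2 h3 h4 h5 h6 <;> simp_all

private lemma uFlow_cases {a b : V} (u v : V) :
    (u = a ∧ v = b) ∨ (u = b ∧ v = a) ∨ uFlow a b u v = 0 := by
  by_cases h1 : u = a ∧ v = b
  · exact Or.inl h1
  by_cases h2 : u = b ∧ v = a
  · exact Or.inr (Or.inl h2)
  · exact Or.inr (Or.inr (by simp [uFlow, h1, h2]))

private lemma uFlow_sum {a b : V} (hab : a ≠ b) (v : V) :
    ∑ w, uFlow a b v w = if v = a then 1 else if v = b then -1 else 0 := by
  by_cases hva : v = a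
  · subst hva
    have h : ∀ w, uFlow v b v w = if w = b then 1 else 0 := by
      intro w; simp only [uFlow, true_and]
      split_ifs with h1 h2 h3 <;> simp_all
    rw [Finset.sum_congr rfl fun w _ => h w, Finset.sum_ite_eq' univ b (fun _ => (1:ℤ))]
    simp
  by_cases hvb : v = b
  · subst hvb
    have h : ∀ w, uFlow a v v w = if w = a then -1 else 0 := by
      intro w; simp only [uFlow]
      split_ifs with h1 h2 h3 <;> simp_all
    rw [Finset.sum_congr rfl fun w _ => h w, Finset.sum_ite_eq' univ a (fun _ => (-1:ℤ))]
    simp [hva]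
  · have h : ∀ w, uFlow a b v w = 0 := by
      intro w; simp only [uFlow]
      split_ifs with h1 h2 <;> simp_all
    rw [Finset.sum_congr rfl fun w _ => h w]
    simp [hva, hvb]

/-- a skew `{0,±1}`-valued function with support exactly `E`. -/
private def Good (E : Set (Sym2 V)) (σ : V → V → ℤ) : Prop :=
  (∀ u v, σ u v = - σ v u) ∧ (∀ u v, σ u v = 0 ∨ σ u v = 1 ∨ σ u v = -1) ∧
  (∀ u v, σ u v ≠ 0 ↔ s(u, v) ∈ E)

private lemma good_add {E : Set (Sym2 V)} {σ : V → V → ℤ} {a b : V} (hab : a ≠ b)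
    (hnm : s(a, b) ∉ E) (hg : Good E σ) :
    Good (insert s(a,b) E) (fun u v => σ u v + uFlow a b u v) ∧
    (∀ v, ∑ w, (σ v w + uFlow a b v w) =
      (∑ w, σ v w) + (if v = a then 1 else if v = b then -1 else 0)) := by
  obtain ⟨hskew, hvals, hsupp⟩ := hg
  have hab0 : σ a b = 0 := by
    by_contra h; exact hnm ((hsupp a b).mp h)
  have hba0 : σ b a = 0 := by rw [hskew b a, hab0]; ring
  have hABval : uFlow a b a b = 1 := by simp [uFlow]
  have hBAval : uFlow a b b a = -1 := by simp [uFlow, hab, Ne.symm hab]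
  refine ⟨⟨?_, ?_, ?_⟩, ?_⟩
  · intro u v
    beta_reduce
    rw [hskew u v, uFlow_skew hab u v]; ring
  · intro u v
    beta_reduce
    rcases uFlow_cases (a := a) (b := b) u v with ⟨rfl, rfl⟩ | ⟨rfl, rfl⟩ | h0
    · rw [hab0, hABval]; norm_num
    · rw [hba0, hBAval]; norm_num
    · rw [h0, add_zero]; exact hvals u v
  · intro u v
    beta_reduce
    rcases uFlow_cases (a := a) (b := b) u v with ⟨rfl, rfl⟩ | ⟨rfl, rfl⟩ | h0
    · rw [hab0, hABval]
      simp
    · rw [hba0, hBAval]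
      simp [Sym2.eq_swap (a := u) (b := v)]
    · rw [h0, add_zero]
      have hne : s(u, v) ≠ s(a, b) := by
        intro h
        rcases Sym2.eq_iff.mp h with ⟨rfl, rfl⟩ | ⟨rfl, rfl⟩
        · rw [hABval] at h0; norm_num at h0
        · rw [hBAval] at h0; norm_num at h0
      rw [hsupp u v, Set.mem_insert_iff]
      simp [hne]
  · intro v
    beta_reduce
    rw [Finset.sum_add_distrib, uFlow_sum hab v]

private lemma key : ∀ (n : ℕ) (E : Set (Sym2 V)), E.ncard = n → (∀ e ∈ E, ¬ e.IsDiag) →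
    ((∀ v, Even {w | s(v, w) ∈ E}.ncard) →
      ∃ σ : V → V → ℤ, Good E σ ∧ ∀ v, ∑ w, σ v w = 0) ∧
    (∀ a b : V, a ≠ b → ¬ Even {w | s(a, w) ∈ E}.ncard → ¬ Even {w | s(b, w) ∈ E}.ncard →
      (∀ v, v ≠ a → v ≠ b → Even {w | s(v, w) ∈ E}.ncard) →
      ∃ σ : V → V → ℤ, Good E σ ∧ (∑ w, σ a w = 1) ∧ (∑ w, σ b w = -1) ∧
        (∀ v, v ≠ a → v ≠ b → ∑ w, σ v w = 0)) := by
  intro n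
  induction n using Nat.strong_induction_on with
  | _ n IH =>
  intro E hn hdiag
  constructor
  · -- even case
    intro heven
    rcases E.eq_empty_or_nonempty with rfl | ⟨e, he⟩
    · exact ⟨0, ⟨fun u v => by simp, fun u v => by simp, fun u v => by simp⟩, fun v => by simp⟩
    · induction e using Sym2.inductionOn with
      | _ a b =>
      have hab : a ≠ b := fun h => (hdiag _ he) (Sym2.mk_isDiag_iff.mpr h)
      have hnpos : 0 < n := by
        rw [← hn]
        exact (Set.ncard_pos (Set.toFinite E)).mpr ⟨_, he⟩
      set E₁ : Set (Sym2 V) := E \ {s(a, b)} with hE₁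
      have hcard : E₁.ncard = n - 1 := by
        rw [hE₁, Set.ncard_diff_singleton_of_mem he, hn]
      have hdiag₁ : ∀ e ∈ E₁, ¬ e.IsDiag := fun e h => hdiag e h.1
      have hdegA : {w | s(a, w) ∈ E₁} = {w | s(a, w) ∈ E} \ {b} := by
        ext w
        simp only [hE₁, Set.mem_diff, Set.mem_setOf_eq, Set.mem_singleton_iff,
          Sym2.congr_right]
      have hdegB : {w | s(b, w) ∈ E₁} = {w | s(b, w) ∈ E} \ {a} := by
        ext w
        simp only [hE₁, Set.mem_diff, Set.mem_setOf_eq, Set.mem_singleton_iff]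
        constructor
        · rintro ⟨h1, h2⟩
          refine ⟨h1, fun hwa => h2 ?_⟩
          subst hwa; exact Sym2.eq_swap
        · rintro ⟨h1, h2⟩
          refine ⟨h1, fun hh => h2 ?_⟩
          rcases Sym2.eq_iff.mp hh with ⟨h3, h4⟩ | ⟨h3, h4⟩
          · exact absurd h3 (Ne.symm hab)
          · exact h4
      have hdegO : ∀ v, v ≠ a → v ≠ b → {w | s(v, w) ∈ E₁} = {w | s(v, w) ∈ E} := by
        intro v hva hvb
        ext w
        simp only [hE₁, Set.mem_diff, Set.mem_setOf_eq, Set.mem_singleton_iff]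
        constructor
        · exact fun h => h.1
        · intro h
          refine ⟨h, fun hh => ?_⟩
          rcases Sym2.eq_iff.mp hh with ⟨h3, _⟩ | ⟨h3, _⟩
          · exact hva h3
          · exact hvb h3
      have hAmem : b ∈ {w | s(a, w) ∈ E} := he
      have hBmem : a ∈ {w | s(b, w) ∈ E} := by
        show s(b, a) ∈ E; rwa [Sym2.eq_swap]
      have hApos : 0 < {w | s(a, w) ∈ E}.ncard :=
        (Set.ncard_pos (Set.toFinite _)).mpr ⟨b, hAmem⟩
      have hBpos : 0 < {w | s(b, w) ∈ E}.ncard :=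
        (Set.ncard_pos (Set.toFinite _)).mpr ⟨a, hBmem⟩
      have hA1 : {w | s(a, w) ∈ E₁}.ncard = {w | s(a, w) ∈ E}.ncard - 1 := by
        rw [hdegA, Set.ncard_diff_singleton_of_mem hAmem]
      have hB1 : {w | s(b, w) ∈ E₁}.ncard = {w | s(b, w) ∈ E}.ncard - 1 := by
        rw [hdegB, Set.ncard_diff_singleton_of_mem hBmem]
      obtain ⟨σ', hgood', hda, hdb, hdo⟩ :=
        (IH (n-1) (by omega) E₁ hcard hdiag₁).2 a b hab
          (by
            have := heven a
            rw [hA1]; rw [Nat.even_iff] at this ⊢; omega)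
          (by
            have := heven b
            rw [hB1]; rw [Nat.even_iff] at this ⊢; omega)
          (fun v hva hvb => by rw [hdegO v hva hvb]; exact heven v)
      have hnm : s(b, a) ∉ E₁ := by
        rw [hE₁, Sym2.eq_swap]; simp
      obtain ⟨hgood, hsum⟩ := good_add (Ne.symm hab) hnm hgood'
      have hEins : insert s(b, a) E₁ = E := by
        rw [Sym2.eq_swap, hE₁, Set.insert_diff_singleton, Set.insert_eq_self.mpr he]
      rw [hEins] at hgood
      refine ⟨_, hgood, fun v => ?_⟩
      beta_reduce
      rw [hsum v]
      by_cases hv1 : v = b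
      · subst hv1; rw [hdb]; simp [Ne.symm hab]
      by_cases hv2 : v = a
      · subst hv2; rw [hda]; simp [hv1]
      · rw [hdo v hv2 hv1]; simp [hv1, hv2]
  · -- odd case
    intro a b hab ha hb hothers
    have hAne : {w | s(a, w) ∈ E}.Nonempty := by
      rcases Set.eq_empty_or_nonempty {w | s(a, w) ∈ E} with h | h
      · exfalso; apply ha; rw [h]; simp
      · exact h
    obtain ⟨c, hc⟩ := hAne
    have hc' : s(a, c) ∈ E := hc
    have hac : a ≠ c := fun h => (hdiag _ hc') (Sym2.mk_isDiag_iff.mpr h)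
    have hnpos : 0 < n := by
      rw [← hn]
      exact (Set.ncard_pos (Set.toFinite E)).mpr ⟨_, hc'⟩
    set E₁ : Set (Sym2 V) := E \ {s(a, c)} with hE₁
    have hcard : E₁.ncard = n - 1 := by
      rw [hE₁, Set.ncard_diff_singleton_of_mem hc', hn]
    have hdiag₁ : ∀ e ∈ E₁, ¬ e.IsDiag := fun e h => hdiag e h.1
    have hdegA : {w | s(a, w) ∈ E₁} = {w | s(a, w) ∈ E} \ {c} := by
      ext w
      simp only [hE₁, Set.mem_diff, Set.mem_setOf_eq, Set.mem_singleton_iff,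
        Sym2.congr_right]
    have hdegC : {w | s(c, w) ∈ E₁} = {w | s(c, w) ∈ E} \ {a} := by
      ext w
      simp only [hE₁, Set.mem_diff, Set.mem_setOf_eq, Set.mem_singleton_iff]
      constructor
      · rintro ⟨h1, h2⟩
        refine ⟨h1, fun hwa => h2 ?_⟩
        subst hwa; exact Sym2.eq_swap
      · rintro ⟨h1, h2⟩
        refine ⟨h1, fun hh => h2 ?_⟩
        rcases Sym2.eq_iff.mp hh with ⟨h3, h4⟩ | ⟨h3, h4⟩
        · exact absurd h3 (Ne.symm hac)
        · exact h4
    have hdegO : ∀ v, v ≠ a → v ≠ c → {w | s(v, w) ∈ E₁} = {w | s(v, w) ∈ E} := by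
      intro v hva hvc
      ext w
      simp only [hE₁, Set.mem_diff, Set.mem_setOf_eq, Set.mem_singleton_iff]
      constructor
      · exact fun h => h.1
      · intro h
        refine ⟨h, fun hh => ?_⟩
        rcases Sym2.eq_iff.mp hh with ⟨h3, _⟩ | ⟨h3, _⟩
        · exact hva h3
        · exact hvc h3
    have hAmem : c ∈ {w | s(a, w) ∈ E} := hc'
    have hCmem : a ∈ {w | s(c, w) ∈ E} := by
      show s(c, a) ∈ E; rwa [Sym2.eq_swap]
    have hA1 : {w | s(a, w) ∈ E₁}.ncard = {w | s(a, w) ∈ E}.ncard - 1 := by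
      rw [hdegA, Set.ncard_diff_singleton_of_mem hAmem]
    have hC1 : {w | s(c, w) ∈ E₁}.ncard = {w | s(c, w) ∈ E}.ncard - 1 := by
      rw [hdegC, Set.ncard_diff_singleton_of_mem hCmem]
    have hApos : 0 < {w | s(a, w) ∈ E}.ncard :=
      (Set.ncard_pos (Set.toFinite _)).mpr ⟨c, hAmem⟩
    have hnm : s(a, c) ∉ E₁ := by rw [hE₁]; simp
    have hEins : insert s(a, c) E₁ = E := by
      rw [hE₁, Set.insert_diff_singleton, Set.insert_eq_self.mpr hc']
    by_cases hcb : c = b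
    · subst hcb
      -- E₁ is everywhere even
      obtain ⟨σ', hgood', hdiv'⟩ := (IH (n-1) (by omega) E₁ hcard hdiag₁).1
        (by
          intro v
          by_cases hva : v = a
          · subst hva
            have := ha
            rw [hA1]; rw [Nat.even_iff] at this ⊢
            omega
          by_cases hvc : v = c
          · have := hb
            have hCpos : 0 < {w | s(c, w) ∈ E}.ncard :=
              (Set.ncard_pos (Set.toFinite _)).mpr ⟨a, hCmem⟩
            rw [hvc, hC1]; rw [Nat.even_iff] at this ⊢
            omega
          · rw [hdegO v hva hvc]; exact hothers v hva hvc)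
      obtain ⟨hgood, hsum⟩ := good_add hac hnm hgood'
      rw [hEins] at hgood
      refine ⟨_, hgood, ?_, ?_, ?_⟩
      · beta_reduce; rw [hsum a, hdiv' a]; simp
      · beta_reduce; rw [hsum c, hdiv' c]; simp [Ne.symm hac]
      · intro v hva hvc
        beta_reduce; rw [hsum v, hdiv' v]; simp [hva, hvc]
    · -- c ≠ b : E₁ odd exactly at c and b
      have hcbne : c ≠ b := hcb
      have hbne_a : b ≠ a := Ne.symm hab
      obtain ⟨σ', hgood', hdc, hdb, hdo⟩ := (IH (n-1) (by omega) E₁ hcard hdiag₁).2 c b hcbne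
        (by
          have := hothers c (Ne.symm hac) hcbne
          rw [hC1]; rw [Nat.even_iff] at this ⊢
          have hCpos : 0 < {w | s(c, w) ∈ E}.ncard :=
            (Set.ncard_pos (Set.toFinite _)).mpr ⟨a, hCmem⟩
          omega)
        (by
          rw [hdegO b hbne_a (Ne.symm hcbne)]; exact hb)
        (by
          intro v hvc hvb
          by_cases hva : v = a
          · subst hva
            have := ha
            rw [hA1]; rw [Nat.even_iff] at this ⊢; omega
          · rw [hdegO v hva hvc]; exact hothers v hva hvb)
      obtain ⟨hgood, hsum⟩ := good_add hac hnm hgood'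
      rw [hEins] at hgood
      refine ⟨_, hgood, ?_, ?_, ?_⟩
      · beta_reduce; rw [hsum a, hdo a hac hab]; simp
      · beta_reduce; rw [hsum b, hdb]; simp [hbne_a, Ne.symm hcbne]
      · intro v hva hvb
        by_cases hvc : v = c
        · beta_reduce; rw [hvc, hsum c, hdc]; simp [Ne.symm hac]
        · beta_reduce; rw [hsum v, hdo v hvc hvb]; simp [hva, hvc]

private lemma eulerian {G : SimpleGraph V} {E : Set (Sym2 V)} (h : IsEvenSubgraph G E) :
    ∃ σ : V → V → ℤ, Good E σ ∧ ∀ v, ∑ w, σ v w = 0 :=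
  (key E.ncard E rfl (fun _ he => G.not_isDiag_of_mem_edgeSet (h.1 he))).1 h.2

private def chi : Fin 3 → Fin 4 → ℤ := fun k g =>
  if k = 0 then (if g = 0 ∨ g = 1 then 1 else -1)
  else if k = 1 then (if g = 0 ∨ g = 2 then 1 else -1)
  else (if g = 0 ∨ g = 3 then 1 else -1)

private lemma chi_helper (a b c : ℤ)
    (ha : a = 0 ∨ a = 1 ∨ a = -1) (hb : b = 0 ∨ b = 1 ∨ b = -1)
    (hc : c = 0 ∨ c = 1 ∨ c = -1)
    (h2 : (a = 0 ∧ b ≠ 0 ∧ c ≠ 0) ∨ (a ≠ 0 ∧ b = 0 ∧ c ≠ 0) ∨ (a ≠ 0 ∧ b ≠ 0 ∧ c = 0)) :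
    ∃ g₀ g₁ : Fin 4, g₀ ≠ g₁ ∧ ∀ g : Fin 4,
      chi 0 g * a + chi 1 g * b + chi 2 g * c =
        if g = g₀ then 2 else if g = g₁ then -2 else 0 := by
  rcases ha with rfl | rfl | rfl <;> rcases hb with rfl | rfl | rfl <;>
    rcases hc with rfl | rfl | rfl <;>
    first
      | (exfalso; revert h2; decide)
      | (clear h2; decide)

private lemma two_nonzero (i j : Fin 3) (hij : i ≠ j) (a b c : ℤ)
    (h0 : a ≠ 0 ↔ ((0 : Fin 3) = i ∨ (0 : Fin 3) = j))
    (h1 : b ≠ 0 ↔ ((1 : Fin 3) = i ∨ (1 : Fin 3) = j))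
    (h2 : c ≠ 0 ↔ ((2 : Fin 3) = i ∨ (2 : Fin 3) = j)) :
    (a = 0 ∧ b ≠ 0 ∧ c ≠ 0) ∨ (a ≠ 0 ∧ b = 0 ∧ c ≠ 0) ∨ (a ≠ 0 ∧ b ≠ 0 ∧ c = 0) := by
  have key : ∀ i j : Fin 3, i ≠ j →
      (¬((0:Fin 3) = i ∨ (0:Fin 3) = j) ∧ ((1:Fin 3) = i ∨ (1:Fin 3) = j) ∧
        ((2:Fin 3) = i ∨ (2:Fin 3) = j)) ∨
      (((0:Fin 3) = i ∨ (0:Fin 3) = j) ∧ ¬((1:Fin 3) = i ∨ (1:Fin 3) = j) ∧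
        ((2:Fin 3) = i ∨ (2:Fin 3) = j)) ∨
      (((0:Fin 3) = i ∨ (0:Fin 3) = j) ∧ ((1:Fin 3) = i ∨ (1:Fin 3) = j) ∧
        ¬((2:Fin 3) = i ∨ (2:Fin 3) = j)) := by decide
  have hk := key i j hij
  rcases hk with ⟨hA, hB, hC⟩ | ⟨hA, hB, hC⟩ | ⟨hA, hB, hC⟩
  · exact Or.inl ⟨not_not.mp (fun hna => hA (h0.mp hna)), h1.mpr hB, h2.mpr hC⟩
  · exact Or.inr (Or.inl ⟨h0.mpr hA, not_not.mp (fun hnb => hB (h1.mp hnb)), h2.mpr hC⟩)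
  · exact Or.inr (Or.inr ⟨h0.mpr hA, h1.mpr hB, not_not.mp (fun hnc => hC (h2.mp hnc))⟩)

private lemma even_support {V : Type*} [Fintype V] (g : V → ℤ)
    (hvals : ∀ w, g w = 0 ∨ g w = 1 ∨ g w = -1) (hsum : ∑ w, g w = 0) :
    Even {w | g w ≠ 0}.ncard := by
  classical
  have h1 : ∑ w, (g w) ^ 2 = ∑ w, (if g w ≠ 0 then (1 : ℤ) else 0) :=
    Finset.sum_congr rfl fun w _ => by rcases hvals w with h | h | h <;> simp [h]
  have h2 : Even (∑ w, (g w) ^ 2) := by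
    have h3 : ∑ w, (g w) ^ 2 = ∑ w, ((g w) ^ 2 - g w) + ∑ w, g w := by
      rw [← Finset.sum_add_distrib]; congr 1; funext w; ring
    rw [h3, hsum, add_zero]
    exact Finset.even_sum _ fun w _ => by rcases hvals w with h | h | h <;> rw [h] <;> decide
  rw [h1, Finset.sum_boole] at h2
  have h4 : {w | g w ≠ 0}.ncard = (Finset.univ.filter fun w => g w ≠ 0).card := by
    rw [← Set.ncard_coe_finset]
    congr 1
    ext w; simp
  rw [h4]
  exact (Int.even_coe_nat _).mp h2

private lemma even_symmDiff {α : Type*} {X Y : Set α} (hX : X.Finite) (hY : Y.Finite)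
    (h1 : Even X.ncard) (h2 : Even Y.ncard) : Even (symmDiff X Y).ncard := by
  have hu := Set.ncard_union_add_ncard_inter X Y hX hY
  have hsub : X ∩ Y ⊆ X ∪ Y := Set.inter_subset_left.trans Set.subset_union_left
  have hd : (symmDiff X Y).ncard = (X ∪ Y).ncard - (X ∩ Y).ncard := by
    rw [symmDiff_eq_sup_sdiff_inf]
    exact Set.ncard_diff hsub (hX.inter_of_left Y)
  have hle : (X ∩ Y).ncard ≤ (X ∪ Y).ncard := Set.ncard_le_ncard hsub (hX.union hY)
  rw [Nat.even_iff] at h1 h2 ⊢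
  omega

private lemma cover_count (i₀ j₀ : Fin 4) (hne : i₀ ≠ j₀) :
    {k : Fin 3 | Xor' ((0 : Fin 4) = i₀ ∨ (0 : Fin 4) = j₀)
      (k.succ = i₀ ∨ k.succ = j₀)}.ncard = 2 := by
  have key : ∀ a b : Fin 4, a ≠ b → ∃ x y : Fin 3, x ≠ y ∧
      ∀ k : Fin 3, (Xor' ((0 : Fin 4) = a ∨ (0 : Fin 4) = b)
        (k.succ = a ∨ k.succ = b) ↔ (k = x ∨ k = y)) := by unfold Xor'; decide
  obtain ⟨x, y, hxy, hiff⟩ := key i₀ j₀ hne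
  have h : {k : Fin 3 | Xor' ((0 : Fin 4) = i₀ ∨ (0 : Fin 4) = j₀)
      (k.succ = i₀ ∨ k.succ = j₀)} = {x, y} := by
    ext k; simp [hiff k]
  rw [h]
  exact Set.ncard_pair hxy

end Aux
private def tF {V : Type*} (σ : Fin 3 → V → V → ℤ) : Fin 4 → V → V → ℤ :=
  fun g u v => chi 0 g * σ 0 u v + chi 1 g * σ 1 u v + chi 2 g * σ 2 u v

/-- A graph admits a 3-cycle double cover (3 even subgraphs covering every
edge exactly twice) if and only if it admits an oriented 4-cycle double
cover (4 oriented even subgraphs covering every edge exactly twice, once in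
each direction). -/
theorem stmt19 {V : Type*} [Fintype V] (G : SimpleGraph V) :
    (∃ C : Fin 3 → Set (Sym2 V),
      (∀ i, IsEvenSubgraph G (C i)) ∧
      (∀ e ∈ G.edgeSet, Set.ncard {i : Fin 3 | e ∈ C i} = 2)) ↔
    (∃ f : Fin 4 → V → V → ℤ,
      (∀ i, IsOrientedCycle G (f i)) ∧
      (∀ u v, G.Adj u v →
        Set.ncard {i : Fin 4 | f i u v = 1} = 1 ∧
        Set.ncard {i : Fin 4 | f i u v = -1} = 1)) := by
  classical
  constructor
  · rintro ⟨C, hC, hcov⟩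
    choose σ hσ using fun k : Fin 3 => eulerian (hC k)
    have hskew : ∀ k u v, σ k u v = - σ k v u := fun k => (hσ k).1.1
    have hvals : ∀ k u v, σ k u v = 0 ∨ σ k u v = 1 ∨ σ k u v = -1 := fun k => (hσ k).1.2.1
    have hsupp : ∀ k u v, σ k u v ≠ 0 ↔ s(u, v) ∈ C k := fun k => (hσ k).1.2.2
    have hdiv : ∀ k v, ∑ w, σ k v w = 0 := fun k => (hσ k).2
    have hσ0 : ∀ k u v, ¬ G.Adj u v → σ k u v = 0 := by
      intro k u v h
      by_contra hne
      exact h ((SimpleGraph.mem_edgeSet G).mp ((hC k).1 ((hsupp k u v).mp hne)))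
    have htzero : ∀ g u v, ¬ G.Adj u v → tF σ g u v = 0 := by
      intro g u v h
      simp only [tF]
      rw [hσ0 0 u v h, hσ0 1 u v h, hσ0 2 u v h]; ring
    have hpat : ∀ u v, G.Adj u v → ∃ g₀ g₁ : Fin 4, g₀ ≠ g₁ ∧
        ∀ g, tF σ g u v = if g = g₀ then 2 else if g = g₁ then -2 else 0 := by
      intro u v huv
      obtain ⟨i, j, hij, hset⟩ :=
        Set.ncard_eq_two.mp (hcov s(u,v) ((SimpleGraph.mem_edgeSet G).mpr huv))
      have hnz : ∀ k : Fin 3, σ k u v ≠ 0 ↔ (k = i ∨ k = j) := by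
        intro k
        rw [hsupp k u v]
        have hk : (s(u,v) ∈ C k) ↔ k ∈ {i : Fin 3 | s(u,v) ∈ C i} := Iff.rfl
        rw [hk, hset]
        simp
      exact chi_helper _ _ _ (hvals 0 u v) (hvals 1 u v) (hvals 2 u v)
        (two_nonzero i j hij _ _ _ (hnz 0) (hnz 1) (hnz 2))
    have ht_vals : ∀ g u v, tF σ g u v = 0 ∨ tF σ g u v = 2 ∨ tF σ g u v = -2 := by
      intro g u v
      by_cases h : G.Adj u v
      · obtain ⟨g₀, g₁, hne, hp⟩ := hpat u v h
        rw [hp g]; split_ifs <;> simp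
      · exact Or.inl (htzero g u v h)
    have ht2 : ∀ g u v, 2 * (tF σ g u v / 2) = tF σ g u v := by
      intro g u v
      rcases ht_vals g u v with h | h | h <;> rw [h] <;> decide
    have htskew : ∀ g u v, tF σ g u v = - tF σ g v u := by
      intro g u v
      simp only [tF]
      rw [hskew 0 u v, hskew 1 u v, hskew 2 u v]; ring
    have hTS : ∀ g v, ∑ w, tF σ g v w = 0 := by
      intro g v
      simp only [tF]
      rw [Finset.sum_add_distrib, Finset.sum_add_distrib, ← Finset.mul_sum, ← Finset.mul_sum,
        ← Finset.mul_sum, hdiv 0 v, hdiv 1 v, hdiv 2 v]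
      ring
    refine ⟨fun g u v => tF σ g u v / 2, fun g => ⟨?_, ?_, ?_, ?_⟩, ?_⟩
    · intro u v
      beta_reduce
      rw [htskew g u v]
      rcases ht_vals g v u with h | h | h <;> rw [h] <;> decide
    · intro u v h0
      beta_reduce at h0
      by_contra hna
      exact h0 (by rw [htzero g u v hna]; norm_num)
    · intro u v
      beta_reduce
      rcases ht_vals g u v with h | h | h <;> rw [h] <;> decide
    · intro v
      beta_reduce
      have h1 : (2:ℤ) * ∑ w, tF σ g v w / 2 = 0 := by
        rw [Finset.mul_sum, Finset.sum_congr rfl fun w _ => ht2 g v w]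
        exact hTS g v
      omega
    · intro u v huv
      obtain ⟨g₀, g₁, hne, hp⟩ := hpat u v huv
      constructor
      · have hset1 : {i : Fin 4 | tF σ i u v / 2 = 1} = {g₀} := by
          ext g
          simp only [Set.mem_setOf_eq, Set.mem_singleton_iff]
          rw [hp g]
          split_ifs with hg0 hg1
          · norm_num [hg0]
          · constructor
            · intro hh; norm_num at hh
            · intro hh; exact absurd hh hg0
          · constructor
            · intro hh; norm_num at hh
            · intro hh; exact absurd hh hg0
        rw [show {i : Fin 4 | (fun g u v => tF σ g u v / 2) i u v = 1}
            = {i : Fin 4 | tF σ i u v / 2 = 1} from rfl, hset1, Set.ncard_singleton]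
      · have hset1 : {i : Fin 4 | tF σ i u v / 2 = -1} = {g₁} := by
          ext g
          simp only [Set.mem_setOf_eq, Set.mem_singleton_iff]
          rw [hp g]
          split_ifs with hg0 hg1
          · constructor
            · intro hh; norm_num at hh
            · intro hh; exact absurd (hg0 ▸ hh : g₀ = g₁) hne
          · norm_num [hg1]
          · constructor
            · intro hh; norm_num at hh
            · intro hh; exact absurd hh hg1
        rw [show {i : Fin 4 | (fun g u v => tF σ g u v / 2) i u v = -1}
            = {i : Fin 4 | tF σ i u v / 2 = -1} from rfl, hset1, Set.ncard_singleton]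
  · rintro ⟨f, hcyc, hcov⟩
    have hskew : ∀ i u v, f i u v = - f i v u := fun i => (hcyc i).1
    have hadj : ∀ i u v, f i u v ≠ 0 → G.Adj u v := fun i => (hcyc i).2.1
    have hvals : ∀ i u v, f i u v = 0 ∨ f i u v = 1 ∨ f i u v = -1 := fun i => (hcyc i).2.2.1
    have hdiv : ∀ i v, ∑ w, f i v w = 0 := fun i => (hcyc i).2.2.2
    set D : Fin 4 → Set (Sym2 V) := fun i => {e | ∃ u v, e = s(u, v) ∧ f i u v ≠ 0} with hD
    have hmemD : ∀ i u v, (s(u, v) ∈ D i ↔ f i u v ≠ 0) := by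
      intro i u v
      constructor
      · rintro ⟨x, y, hxy, hne⟩
        rcases Sym2.eq_iff.mp hxy with ⟨rfl, rfl⟩ | ⟨rfl, rfl⟩
        · exact hne
        · rw [hskew i u v]
          simpa using hne
      · intro h; exact ⟨u, v, rfl, h⟩
    have hDsub : ∀ i, D i ⊆ G.edgeSet := by
      rintro i e ⟨u, v, rfl, hne⟩
      exact (SimpleGraph.mem_edgeSet G).mpr (hadj i u v hne)
    have hdegD : ∀ i v, Even {w | s(v, w) ∈ D i}.ncard := by
      intro i v
      have he : {w | s(v, w) ∈ D i} = {w | f i v w ≠ 0} := Set.ext fun w => hmemD i v w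
      rw [he]
      exact even_support (f i v) (fun w => hvals i v w) (hdiv i v)
    refine ⟨fun k => symmDiff (D 0) (D k.succ), fun k => ⟨?_, ?_⟩, ?_⟩
    · exact Set.symmDiff_subset_union.trans (Set.union_subset (hDsub 0) (hDsub _))
    · intro v
      beta_reduce
      have he : {w | s(v, w) ∈ symmDiff (D 0) (D k.succ)} =
          symmDiff {w | s(v, w) ∈ D 0} {w | s(v, w) ∈ D k.succ} := by
        ext w
        simp [Set.mem_symmDiff]
      rw [he]
      exact even_symmDiff (Set.toFinite _) (Set.toFinite _) (hdegD 0 v) (hdegD _ v)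
    · intro e
      induction e using Sym2.inductionOn with
      | _ u v =>
      intro he
      have huv : G.Adj u v := (SimpleGraph.mem_edgeSet G).mp he
      obtain ⟨hp, hn⟩ := hcov u v huv
      obtain ⟨i₀, hi₀⟩ := Set.ncard_eq_one.mp hp
      obtain ⟨j₀, hj₀⟩ := Set.ncard_eq_one.mp hn
      have hfi : f i₀ u v = 1 := by
        have : i₀ ∈ {i : Fin 4 | f i u v = 1} := by rw [hi₀]; rfl
        exact this
      have hfj : f j₀ u v = -1 := by
        have : j₀ ∈ {i : Fin 4 | f i u v = -1} := by rw [hj₀]; rfl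
        exact this
      have hne : i₀ ≠ j₀ := by
        intro h; rw [h, hfj] at hfi; norm_num at hfi
      have hchar : ∀ i, f i u v ≠ 0 ↔ (i = i₀ ∨ i = j₀) := by
        intro i
        constructor
        · intro h
          rcases hvals i u v with h0 | h1 | h1
          · exact absurd h0 h
          · left
            have : i ∈ {i : Fin 4 | f i u v = 1} := h1
            rwa [hi₀] at this
          · right
            have : i ∈ {i : Fin 4 | f i u v = -1} := h1
            rwa [hj₀] at this
        · rintro (rfl | rfl)
          · rw [hfi]; norm_num
          · rw [hfj]; norm_num
      have hsetEq : {k : Fin 3 | s(u, v) ∈ symmDiff (D 0) (D k.succ)} =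
          {k : Fin 3 | Xor' ((0 : Fin 4) = i₀ ∨ (0 : Fin 4) = j₀)
            (k.succ = i₀ ∨ k.succ = j₀)} := by
        ext k
        simp only [Set.mem_setOf_eq, Set.mem_symmDiff, Xor', xor_def]
        rw [hmemD 0 u v, hmemD k.succ u v, hchar 0, hchar k.succ]
      have hgoal : {k : Fin 3 | s(u, v) ∈ (fun k => symmDiff (D 0) (D k.succ)) k} =
          {k : Fin 3 | s(u, v) ∈ symmDiff (D 0) (D k.succ)} := rfl
      rw [hgoal, hsetEq]
      exact cover_count i₀ j₀ hne
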